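/- Let A = ℝ[z², z³] be the subring of ℝ[z] generated by z² and z³, with field of fractions F = ℝ(z). Then the column vector P = [(1−z³)/(1−z²), (1−8z³)/(1−4z²)]ᵗ ∈ F^{2×1} admits no right-coprime factorization over A: there exist no N ∈ A^{2×1}, d ∈ A∖{0} and Ỹ ∈ A^{1×2}, x̃ ∈ A with P = N d⁻¹ and Ỹ N + x̃ d = 1. -/

import Mathlib

open Polynomial

noncomputable def Tsub : Subalgebra ℝ (Polynomial ℝ) where
  carrier := {f | f.coeff 1 = 0}
  mul_mem' := by
    intro a b ha hb
    simp only [Set.mem_setOf_eq] at *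
    rw [coeff_mul, Finset.Nat.sum_antidiagonal_eq_sum_range_succ_mk]
    simp [Finset.sum_range_succ, ha, hb]
  one_mem' := by simp [Set.mem_setOf_eq, coeff_one]
  add_mem' := by
    intro a b ha hb
    simp only [Set.mem_setOf_eq] at *
    simp [ha, hb]
  zero_mem' := by simp
  algebraMap_mem' := by
    intro r
    simp only [Set.mem_setOf_eq, Polynomial.algebraMap_eq]
    simp [coeff_C]

lemma coeff_one_of_mem (f : Polynomial ℝ)
    (hf : f ∈ Algebra.adjoin ℝ {(X : Polynomial ℝ) ^ 2, (X : Polynomial ℝ) ^ 3}) :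
    f.coeff 1 = 0 := by
  have h : Algebra.adjoin ℝ {(X : Polynomial ℝ) ^ 2, (X : Polynomial ℝ) ^ 3} ≤ Tsub := by
    apply Algebra.adjoin_le
    rintro g (rfl | rfl) <;>
      · show _ ∈ {f : Polynomial ℝ | f.coeff 1 = 0}
        simp [coeff_X_pow]
  exact h hf

lemma ratfunc_inj : Function.Injective (algebraMap (Polynomial ℝ) (RatFunc ℝ)) :=
  IsFractionRing.injective _ _

set_option synthInstance.maxHeartbeats 1000000 in
/-- over `A = ℝ[z²,z³]`, the plant
`P = [(1−z³)/(1−z²), (1−8z³)/(1−4z²)]ᵗ` has no right-coprime factorization. -/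
theorem stmt_17 :
    let S : Subalgebra ℝ (Polynomial ℝ) :=
      Algebra.adjoin ℝ {(X : Polynomial ℝ) ^ 2, (X : Polynomial ℝ) ^ 3}
    let ι := algebraMap (Polynomial ℝ) (RatFunc ℝ)
    let P : Matrix (Fin 2) (Fin 1) (RatFunc ℝ) :=
      !![(1 - RatFunc.X ^ 3) / (1 - RatFunc.X ^ 2);
         (1 - 8 * RatFunc.X ^ 3) / (1 - 4 * RatFunc.X ^ 2)]
    ¬ ∃ (N : Matrix (Fin 2) (Fin 1) (Polynomial ℝ)) (d : Polynomial ℝ)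
        (Y : Matrix (Fin 1) (Fin 2) (Polynomial ℝ)) (x : Polynomial ℝ),
        (∀ i j, N i j ∈ S) ∧ d ∈ S ∧ d ≠ 0 ∧ (∀ i j, Y i j ∈ S) ∧ x ∈ S ∧
        ι d • P = N.map ι ∧
        Y * N + (x * d) • (1 : Matrix (Fin 1) (Fin 1) (Polynomial ℝ)) = 1 := by
  intro S ι P
  rintro ⟨N, d, Y, x, hN, hd, hd0, hY, hx, hfac, hbez⟩
  -- entrywise factorization equations
  have h1 : ι d * ((1 - RatFunc.X ^ 3) / (1 - RatFunc.X ^ 2)) = ι (N 0 0) := by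
    have := congrFun (congrFun hfac 0) 0
    simpa [P, Matrix.smul_apply, smul_eq_mul] using this
  have h2 : ι d * ((1 - 8 * RatFunc.X ^ 3) / (1 - 4 * RatFunc.X ^ 2)) = ι (N 1 0) := by
    have := congrFun (congrFun hfac 1) 0
    simpa [P, Matrix.smul_apply, smul_eq_mul] using this
  -- convert to polynomial equations
  have hX : (RatFunc.X : RatFunc ℝ) = ι X := RatFunc.algebraMap_X.symm
  have hne1 : (1 : RatFunc ℝ) - RatFunc.X ^ 2 ≠ 0 := by
    rw [hX]
    have : (1 : RatFunc ℝ) - ι X ^ 2 = ι (1 - X ^ 2) := by push_cast [map_sub, map_pow, map_one]; ring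
    rw [this, map_ne_zero_iff ι ratfunc_inj]
    intro h
    have := congrArg (fun p => Polynomial.coeff p 2) h
    simp [coeff_one] at this
  have hne2 : (1 : RatFunc ℝ) - 4 * RatFunc.X ^ 2 ≠ 0 := by
    rw [hX]
    have : (1 : RatFunc ℝ) - 4 * ι X ^ 2 = ι (1 - 4 * X ^ 2) := by
      push_cast [map_sub, map_pow, map_one, map_mul, map_ofNat]; ring
    rw [this, map_ne_zero_iff ι ratfunc_inj]
    intro h
    have := congrArg (fun p => Polynomial.coeff p 2) h
    simp [coeff_one] at this
  have e1 : d * (1 - X ^ 3) = N 0 0 * (1 - X ^ 2) := by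
    apply ratfunc_inj
    simp only [map_mul, map_sub, map_pow, map_one, map_ofNat, ← hX]
    rw [← mul_div_assoc, div_eq_iff hne1] at h1
    exact h1
  have e2 : d * (1 - 8 * X ^ 3) = N 1 0 * (1 - 4 * X ^ 2) := by
    apply ratfunc_inj
    simp only [map_mul, map_sub, map_pow, map_one, map_ofNat, ← hX]
    rw [← mul_div_assoc, div_eq_iff hne2] at h2
    exact h2
  -- cancel common factors
  have hxm1 : (1 - X : Polynomial ℝ) ≠ 0 := by
    intro h
    have := congrArg (fun p => Polynomial.coeff p 1) h
    simp [coeff_one] at this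
  have hxm2 : (1 - 2 * X : Polynomial ℝ) ≠ 0 := by
    intro h
    have := congrArg (fun p => Polynomial.coeff p 1) h
    simp [coeff_one] at this
  have f1 : d * (1 + X + X ^ 2) = N 0 0 * (1 + X) := by
    apply mul_right_cancel₀ hxm1
    linear_combination e1
  have f2 : d * (1 + 2 * X + 4 * X ^ 2) = N 1 0 * (1 + 2 * X) := by
    apply mul_right_cancel₀ hxm2
    linear_combination e2
  have cop1 : IsCoprime (1 + X : Polynomial ℝ) (1 + X + X ^ 2) := ⟨-X, 1, by ring⟩
  have cop2 : IsCoprime (1 + 2 * X : Polynomial ℝ) (1 + 2 * X + 4 * X ^ 2) := ⟨-(2*X), 1, by ring⟩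
  have cop3 : IsCoprime (1 + X : Polynomial ℝ) (1 + 2 * X) := ⟨2, -1, by ring⟩
  have dvd1 : (1 + X : Polynomial ℝ) ∣ d :=
    cop1.dvd_of_dvd_mul_right ⟨N 0 0, by linear_combination f1⟩
  have dvd2 : (1 + 2 * X : Polynomial ℝ) ∣ d :=
    cop2.dvd_of_dvd_mul_right ⟨N 1 0, by linear_combination f2⟩
  obtain ⟨e, he⟩ := cop3.mul_dvd dvd1 dvd2
  -- express N entries
  have hne3 : (1 + X : Polynomial ℝ) ≠ 0 := by
    intro h
    have := congrArg (fun p => Polynomial.coeff p 1) h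
    simp [coeff_one] at this
  have hne4 : (1 + 2 * X : Polynomial ℝ) ≠ 0 := by
    intro h
    have := congrArg (fun p => Polynomial.coeff p 1) h
    simp [coeff_one] at this
  have n1 : N 0 0 = (1 + 2 * X) * (1 + X + X ^ 2) * e := by
    apply mul_right_cancel₀ hne3
    rw [he] at f1
    linear_combination -f1
  have n2 : N 1 0 = (1 + X) * (1 + 2 * X + 4 * X ^ 2) * e := by
    apply mul_right_cancel₀ hne4
    rw [he] at f2
    linear_combination -f2
  -- Bezout equation at entry (0,0)
  have hb : Y 0 0 * N 0 0 + Y 0 1 * N 1 0 + x * d = 1 := by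
    have := congrFun (congrFun hbez 0) 0
    simpa [Matrix.add_apply, Matrix.mul_apply, Fin.sum_univ_two, Matrix.smul_apply,
      Matrix.one_apply, smul_eq_mul] using this
  -- e is a unit
  have hunit : IsUnit e := by
    apply IsUnit.of_mul_eq_one (a := e)
      (Y 0 0 * ((1 + 2 * X) * (1 + X + X ^ 2)) + Y 0 1 * ((1 + X) * (1 + 2 * X + 4 * X ^ 2)) +
        x * ((1 + X) * (1 + 2 * X)))
    rw [n1, n2, he] at hb
    linear_combination hb
  obtain ⟨c, hcu, hce⟩ := Polynomial.isUnit_iff.mp hunit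
  -- the z-coefficient of d
  have hco : d.coeff 1 = 0 := coeff_one_of_mem d hd
  have hdc : d = C c + C (3 * c) * X + C (2 * c) * X ^ 2 := by
    rw [he, ← hce]
    simp only [map_mul, map_ofNat]
    ring
  rw [hdc] at hco
  simp [coeff_C, coeff_X, coeff_X_pow, coeff_C_mul, mul_assoc] at hco
  exact hcu.ne_zero (by linarith [hco])
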